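/- Let L = h²∂² + 2u with u ∈ R and let c ∈ R with ∂c = 0. In Ψ(R)[ε] set L̃ := L − 2εc. Then the unique square root of L̃ of the form h∂ + (terms of order ≤ 0) is L̃^{1/2} = L^{1/2} − ε c L^{−1/2}; for every p ≥ 0 one has L̃^{p+1/2} := (L̃^{1/2})^{2p+1} = L^{p+1/2} − ε (2p+1) c L^{p−1/2}; and consequently Res_∂ L̃^{p+1/2} = Res_∂ L^{p+1/2} − ε (2p+1) c · Res_∂ L^{p−1/2}. -/

import Mathlib

open scoped BigOperators

/-- Generalized binomial coefficient `C(k,l) = k(k-1)⋯(k-l+1)/l!` for `k : ℤ`. -/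
def gbinom (k : ℤ) (l : ℕ) : ℚ :=
  (∏ i ∈ Finset.range l, ((k : ℚ) - i)) / (Nat.factorial l)

/-- Pseudo-differential operators (and symbols): coefficient functions `ℤ → R`
with support bounded above.  The parameter `d` (the derivation) determines the product. -/
structure PDO (R : Type) [CommRing R] [Algebra ℚ R] (d : R →+ R) where
  coeff : ℤ → R
  bdd : ∃ N : ℤ, ∀ n : ℤ, N < n → coeff n = 0

namespace PDO

variable {R : Type} [CommRing R] [Algebra ℚ R] {d : R →+ R}

theorem ext' {A B : PDO R d} (h : A.coeff = B.coeff) : A = B := by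
  cases A; cases B; cases h; rfl

set_option linter.unusedSectionVars false in
theorem iterD_zero (d : R →+ R) (j : ℕ) : d^[j] (0 : R) = 0 := by
  induction j with
  | zero => rfl
  | succ j ih => rw [Function.iterate_succ_apply', ih, map_zero]

instance : Zero (PDO R d) := ⟨⟨fun _ => 0, ⟨0, fun _ _ => rfl⟩⟩⟩

instance : One (PDO R d) :=
  ⟨⟨fun n => if n = 0 then 1 else 0, ⟨0, fun n hn => if_neg (by omega)⟩⟩⟩

instance : Add (PDO R d) :=
  ⟨fun A B => ⟨fun n => A.coeff n + B.coeff n, by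
    obtain ⟨N, hN⟩ := A.bdd
    obtain ⟨M, hM⟩ := B.bdd
    exact ⟨max N M, fun n hn => by
      show A.coeff n + B.coeff n = 0
      rw [hN n (lt_of_le_of_lt (le_max_left N M) hn),
        hM n (lt_of_le_of_lt (le_max_right N M) hn), add_zero]⟩⟩⟩

instance : Neg (PDO R d) :=
  ⟨fun A => ⟨fun n => -A.coeff n, by
    obtain ⟨N, hN⟩ := A.bdd
    exact ⟨N, fun n hn => by show -A.coeff n = 0; rw [hN n hn, neg_zero]⟩⟩⟩

instance : SMul ℚ (PDO R d) :=
  ⟨fun c A => ⟨fun n => c • A.coeff n, by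
    obtain ⟨N, hN⟩ := A.bdd
    exact ⟨N, fun n hn => by show c • A.coeff n = 0; rw [hN n hn, smul_zero]⟩⟩⟩

instance : AddCommGroup (PDO R d) where
  add := (· + ·)
  zero := 0
  neg := Neg.neg
  add_assoc A B C := ext' (funext fun n => add_assoc (A.coeff n) (B.coeff n) (C.coeff n))
  zero_add A := ext' (funext fun n => zero_add (A.coeff n))
  add_zero A := ext' (funext fun n => add_zero (A.coeff n))
  add_comm A B := ext' (funext fun n => add_comm (A.coeff n) (B.coeff n))
  neg_add_cancel A := ext' (funext fun n => neg_add_cancel (A.coeff n))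
  nsmul := nsmulRec
  zsmul := zsmulRec

/-- The product of pseudo-differential operators, determined by the commutation rule
`∂^k · f = Σ_{l ≥ 0} C(k,l) (∂^l f) ∂^(k-l)`. -/
noncomputable instance : Mul (PDO R d) :=
  ⟨fun A B =>
    ⟨fun n => ∑ᶠ (k : ℤ) (m : ℤ),
        if _ : 0 ≤ k + m - n then
          A.coeff k * (gbinom k (k + m - n).toNat • (d^[(k + m - n).toNat] (B.coeff m)))
        else 0, by
      obtain ⟨N, hN⟩ := A.bdd
      obtain ⟨M, hM⟩ := B.bdd
      refine ⟨N + M, fun n hn => ?_⟩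
      have hz : ∀ k m : ℤ,
          (if _ : 0 ≤ k + m - n then
            A.coeff k * (gbinom k (k + m - n).toNat • (d^[(k + m - n).toNat] (B.coeff m)))
          else 0) = 0 := by
        intro k m
        by_cases hl : 0 ≤ k + m - n
        · rw [dif_pos hl]
          by_cases hk : N < k
          · rw [hN k hk, zero_mul]
          · rw [hM m (by omega), iterD_zero, smul_zero, mul_zero]
        · rw [dif_neg hl]
      simp only [hz, finsum_zero]⟩⟩

noncomputable def npow (A : PDO R d) : ℕ → PDO R d
  | 0 => 1
  | n + 1 => npow A n * A

noncomputable instance : Pow (PDO R d) ℕ := ⟨fun A n => A.npow n⟩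

/-- The monomial `r ∂^k`. -/
def mono (r : R) (k : ℤ) : PDO R d :=
  ⟨fun n => if n = k then r else 0, ⟨k, fun n hn => if_neg (by omega)⟩⟩

/-- The constant (order-zero) operator `r`. -/
def const (r : R) : PDO R d := mono r 0

/-- The operator `∂`. -/
def del : PDO R d := mono (1 : R) 1

/-- The operator `h∂`. -/
def hdel (h : Rˣ) : PDO R d := mono (h : R) 1

/-- The Lax operator `L = h²∂² + 2u`. -/
def Lop (h : Rˣ) (u : R) : PDO R d :=
  ⟨fun n => if n = 2 then (h : R) ^ 2 else if n = 0 then 2 * u else 0,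
   ⟨2, fun n hn => by
      show (if n = 2 then (h : R) ^ 2 else if n = 0 then 2 * u else 0) = 0
      rw [if_neg (by omega), if_neg (by omega)]⟩⟩

/-- The differential part `A₊`. -/
def pos (A : PDO R d) : PDO R d :=
  ⟨fun n => if 0 ≤ n then A.coeff n else 0, by
    obtain ⟨N, hN⟩ := A.bdd
    refine ⟨N, fun n hn => ?_⟩
    show (if 0 ≤ n then A.coeff n else 0) = 0
    by_cases h0 : (0 : ℤ) ≤ n
    · rw [if_pos h0]; exact hN n hn
    · rw [if_neg h0]⟩

/-- The integral part `A₋ = A − A₊`. -/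
def negp (A : PDO R d) : PDO R d :=
  ⟨fun n => if n < 0 then A.coeff n else 0, ⟨0, fun n hn => if_neg (by omega)⟩⟩

/-- The residue `Res_∂ A = a₋₁`. -/
def res (A : PDO R d) : R := A.coeff (-1)

/-- The formal adjoint, determined by `(f ∂^k)* = (−∂)^k · f`. -/
noncomputable def adj (A : PDO R d) : PDO R d :=
  ⟨fun n => ∑ᶠ k : ℤ,
      if _ : 0 ≤ k - n then
        (((-1 : ℚ) ^ k) * gbinom k (k - n).toNat) • (d^[(k - n).toNat] (A.coeff k))
      else 0, by
    obtain ⟨N, hN⟩ := A.bdd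
    refine ⟨N, fun n hn => ?_⟩
    have hz : ∀ k : ℤ, (if _ : 0 ≤ k - n then
        (((-1 : ℚ) ^ k) * gbinom k (k - n).toNat) • (d^[(k - n).toNat] (A.coeff k))
      else 0) = 0 := by
      intro k
      by_cases hl : 0 ≤ k - n
      · rw [dif_pos hl, hN k (by omega), iterD_zero, smul_zero]
      · rw [dif_neg hl]
    simp only [hz, finsum_zero]⟩

/-- The operator `P(h∂) = Σ pₙ hⁿ ∂ⁿ` associated to the symbol `P(λ) = Σ pₙ λⁿ`. -/
noncomputable def ofSymbol (h : Rˣ) (A : PDO R d) : PDO R d :=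
  ⟨fun n => A.coeff n * ((h ^ n : Rˣ) : R), by
    obtain ⟨N, hN⟩ := A.bdd
    exact ⟨N, fun n hn => by show A.coeff n * ((h ^ n : Rˣ) : R) = 0; rw [hN n hn, zero_mul]⟩⟩

/-- Apply `d^[i]` to each coefficient. -/
def mapD (i : ℕ) (A : PDO R d) : PDO R d :=
  ⟨fun n => d^[i] (A.coeff n), by
    obtain ⟨N, hN⟩ := A.bdd
    exact ⟨N, fun n hn => by show d^[i] (A.coeff n) = 0; rw [hN n hn, iterD_zero]⟩⟩

/-- The coefficientwise extension of an additive map `D : R →+ R`. -/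
def mapHom (D : R →+ R) (A : PDO R d) : PDO R d :=
  ⟨fun n => D (A.coeff n), by
    obtain ⟨N, hN⟩ := A.bdd
    exact ⟨N, fun n hn => by show D (A.coeff n) = 0; rw [hN n hn, map_zero]⟩⟩

/-- The commutator `[A, B] = AB − BA`. -/
noncomputable def comm (A B : PDO R d) : PDO R d := A * B - B * A

end PDO

/-- The Leibniz rule: `d` is a derivation. -/
def Leibniz {R : Type} [CommRing R] [Algebra ℚ R] (d : R →+ R) : Prop :=
  ∀ a b : R, d (a * b) = a * d b + b * d a

/-- `aₙ = 1/(2n+1)!!`. -/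
def kdvA (n : ℕ) : ℚ := 1 / (Nat.doubleFactorial (2 * n + 1))

/-- `bₙ = (2n−1)!!` (with `b₀ = (−1)!! = 1`). -/
def kdvB (n : ℕ) : ℚ := (Nat.doubleFactorial (2 * n - 1) : ℕ)

/-- Pseudo-differential operators with coefficients in the dual numbers
`R[ε]/(ε²)`: `⟨A, B⟩` represents `A + εB`. -/
structure EPDO (R : Type) [CommRing R] [Algebra ℚ R] (d : R →+ R) where
  re : PDO R d
  im : PDO R d

namespace EPDO

variable {R : Type} [CommRing R] [Algebra ℚ R] {d : R →+ R}

instance : Add (EPDO R d) := ⟨fun A B => ⟨A.re + B.re, A.im + B.im⟩⟩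
instance : Neg (EPDO R d) := ⟨fun A => ⟨-A.re, -A.im⟩⟩
instance : Sub (EPDO R d) := ⟨fun A B => ⟨A.re - B.re, A.im - B.im⟩⟩
instance : Zero (EPDO R d) := ⟨⟨0, 0⟩⟩
instance : One (EPDO R d) := ⟨⟨1, 0⟩⟩

/-- Multiplication in the dual numbers: `(A + εB)(C + εD) = AC + ε(AD + BC)`. -/
noncomputable instance : Mul (EPDO R d) :=
  ⟨fun A B => ⟨A.re * B.re, A.re * B.im + A.im * B.re⟩⟩

instance : SMul ℚ (EPDO R d) := ⟨fun c A => ⟨c • A.re, c • A.im⟩⟩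

noncomputable def epow (A : EPDO R d) : ℕ → EPDO R d
  | 0 => 1
  | n + 1 => epow A n * A

noncomputable instance : Pow (EPDO R d) ℕ := ⟨fun A n => A.epow n⟩

/-- The inclusion `Ψ(R) → Ψ(R)[ε]`. -/
def lift (A : PDO R d) : EPDO R d := ⟨A, 0⟩

/-- The square-zero formal parameter `ε`. -/
def eps : EPDO R d := ⟨0, 1⟩

/-- The adjoint, extended `ε`-linearly. -/
noncomputable def eadj (A : EPDO R d) : EPDO R d := ⟨PDO.adj A.re, PDO.adj A.im⟩

/-- The differential part, extended `ε`-linearly. -/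
def epos (A : EPDO R d) : EPDO R d := ⟨PDO.pos A.re, PDO.pos A.im⟩

/-- The integral part, extended `ε`-linearly. -/
def enegp (A : EPDO R d) : EPDO R d := ⟨PDO.negp A.re, PDO.negp A.im⟩

/-- The commutator in `Ψ(R)[ε]`. -/
noncomputable def ecomm (A B : EPDO R d) : EPDO R d := A * B - B * A

/-- The residue, with values in the dual numbers `R[ε]` (as a pair). -/
def eres (A : EPDO R d) : R × R := (PDO.res A.re, PDO.res A.im)

end EPDO


noncomputable def qbinom (x : ℚ) (l : ℕ) : ℚ := Ring.choose x l

lemma descPoch_smeval_rat (x : ℚ) (l : ℕ) :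
    (descPochhammer ℤ l).smeval x = ∏ i ∈ Finset.range l, (x - i) := by
  induction l with
  | zero => simp [descPochhammer_zero, Polynomial.smeval_one]
  | succ n ih =>
      rw [descPochhammer_succ_right, Polynomial.smeval_mul, ih, Finset.prod_range_succ]
      congr 1
      simp [Polynomial.smeval_sub, Polynomial.smeval_X, Polynomial.smeval_natCast]

lemma gbinom_eq_choose (k : ℤ) (l : ℕ) : gbinom k l = Ring.choose (k : ℚ) l := by
  have h := Ring.descPochhammer_eq_factorial_smul_choose (R := ℚ) (k : ℚ) l
  rw [descPoch_smeval_rat] at h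
  have hf : (Nat.factorial l : ℚ) ≠ 0 := by exact_mod_cast Nat.factorial_ne_zero l
  rw [gbinom, h, nsmul_eq_mul]
  field_simp

lemma gbinom_zero (k : ℤ) : gbinom k 0 = 1 := by simp [gbinom]

lemma gbinom_vandermonde (x y : ℤ) (n : ℕ) :
    gbinom (x + y) n = ∑ s ∈ Finset.range (n + 1), gbinom x (n - s) * gbinom y s := by
  have h := Ring.add_choose_eq (R := ℚ) (r := (x:ℚ)) (s := (y:ℚ)) n (Commute.all _ _)
  rw [Finset.Nat.sum_antidiagonal_eq_sum_range_succ (fun i j => Ring.choose (x:ℚ) i * Ring.choose (y:ℚ) j)] at h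
  push_cast [gbinom_eq_choose]
  rw [h, ← Finset.sum_range_reflect]
  apply Finset.sum_congr rfl
  intro i hi
  simp only [Finset.mem_range] at hi
  rw [Nat.succ_sub_one]
  congr 2
  omega

lemma gbinom_subset (k : ℤ) (i j : ℕ) (hij : i ≤ j) :
    (j.choose i : ℚ) * gbinom k j = gbinom k i * gbinom (k - i) (j - i) := by
  have hsplit : (∏ t ∈ Finset.range j, ((k:ℚ) - t))
      = (∏ t ∈ Finset.range i, ((k:ℚ) - t)) * ∏ t ∈ Finset.range (j - i), ((k:ℚ) - i - t) := by
    rw [← Finset.prod_range_mul_prod_Ico _ hij, ]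
    congr 1
    rw [Finset.prod_Ico_eq_prod_range]
    apply Finset.prod_congr rfl
    intro t _
    push_cast
    ring
  have hc : (j.choose i : ℚ) = (Nat.factorial j : ℚ) / (Nat.factorial i * Nat.factorial (j - i)) := by
    rw [Nat.cast_choose ℚ hij]
  simp only [gbinom, hc]
  push_cast
  rw [hsplit]
  have h1 : (Nat.factorial i : ℚ) ≠ 0 := by exact_mod_cast Nat.factorial_ne_zero i
  have h2 : (Nat.factorial (j-i) : ℚ) ≠ 0 := by exact_mod_cast Nat.factorial_ne_zero _
  have h3 : (Nat.factorial j : ℚ) ≠ 0 := by exact_mod_cast Nat.factorial_ne_zero j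
  field_simp

lemma gbinom_key (k m : ℤ) (i L : ℕ) (hi : i ≤ L) :
    ∑ s ∈ Finset.range (L + 1), (Nat.choose (L - s) i : ℚ) * gbinom k (L - s) * gbinom m s
      = gbinom k i * gbinom (k + m - i) (L - i) := by
  have hsub : ∑ s ∈ Finset.range (L + 1), (Nat.choose (L - s) i : ℚ) * gbinom k (L - s) * gbinom m s
      = ∑ s ∈ Finset.range (L - i + 1), (Nat.choose (L - s) i : ℚ) * gbinom k (L - s) * gbinom m s := by
    refine (Finset.sum_subset ?_ ?_).symm
    · intro x hx
      rw [Finset.mem_range] at hx ⊢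
      omega
    · intro x hx1 hx2
      rw [Finset.mem_range] at hx1 hx2
      rw [Nat.choose_eq_zero_of_lt (by omega)]
      simp
  rw [hsub]
  have hv := gbinom_vandermonde (k - i) m (L - i)
  have harg : k - (i:ℤ) + m = k + m - i := by ring
  rw [harg] at hv
  rw [hv, Finset.mul_sum]
  apply Finset.sum_congr rfl
  intro s hs
  rw [Finset.mem_range] at hs
  have h1 : i ≤ L - s := by omega
  have h2 : (L - s) - i = (L - i) - s := by omega
  rw [gbinom_subset k i (L - s) h1, h2, mul_assoc]

namespace PDO

variable {R : Type} [CommRing R] [Algebra ℚ R] {d : R →+ R}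

set_option linter.unusedSectionVars false

/-- The guarded term in the product. -/
def tm (A B : PDO R d) (n k m : ℤ) : R :=
  if 0 ≤ k + m - n then
    A.coeff k * (gbinom k (k + m - n).toNat • (d^[(k + m - n).toNat] (B.coeff m)))
  else 0

theorem tm_zero_left (A B : PDO R d) (n k m : ℤ) (h : A.coeff k = 0) : tm A B n k m = 0 := by
  unfold tm; split <;> simp [h]

theorem tm_zero_right (A B : PDO R d) (n k m : ℤ) (h : B.coeff m = 0) : tm A B n k m = 0 := by
  unfold tm; split <;> simp [h, iterD_zero]

theorem tm_zero_guard (A B : PDO R d) (n k m : ℤ) (h : k + m < n) : tm A B n k m = 0 := by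
  unfold tm; rw [if_neg (by omega)]

theorem coeff_mul_eq (A B : PDO R d) (n : ℤ) {a b : ℤ}
    (ha : ∀ k, a < k → A.coeff k = 0) (hb : ∀ m, b < m → B.coeff m = 0)
    {s t : Finset ℤ} (hs : Finset.Icc (n - b) a ⊆ s) (ht : Finset.Icc (n - a) b ⊆ t) :
    (A * B).coeff n = ∑ k ∈ s, ∑ m ∈ t, tm A B n k m := by
  have hdef : (A * B).coeff n = ∑ᶠ (k : ℤ) (m : ℤ), tm A B n k m := by
    show (∑ᶠ (k : ℤ) (m : ℤ), if _ : 0 ≤ k + m - n then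
          A.coeff k * (gbinom k (k + m - n).toNat • (d^[(k + m - n).toNat] (B.coeff m)))
        else 0) = _
    simp only [dite_eq_ite]
    rfl
  rw [hdef]
  have hinner : ∀ k : ℤ, (∑ᶠ m : ℤ, tm A B n k m) = ∑ m ∈ t, tm A B n k m := by
    intro k
    apply finsum_eq_sum_of_support_subset
    intro m hm
    simp only [Function.mem_support] at hm
    by_contra hmt
    apply hm
    by_cases hka : a < k
    · exact tm_zero_left _ _ _ _ _ (ha k hka)
    · by_cases hmb : b < m
      · exact tm_zero_right _ _ _ _ _ (hb m hmb)
      · refine tm_zero_guard _ _ _ _ _ ?_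
        by_contra hg
        exact hmt (ht (Finset.mem_Icc.2 (by omega)))
  simp only [hinner]
  apply finsum_eq_sum_of_support_subset
  intro k hk
  simp only [Function.mem_support] at hk
  by_contra hks
  apply hk
  apply Finset.sum_eq_zero
  intro m hm
  by_cases hka : a < k
  · exact tm_zero_left _ _ _ _ _ (ha k hka)
  · by_cases hmb : b < m
    · exact tm_zero_right _ _ _ _ _ (hb m hmb)
    · refine tm_zero_guard _ _ _ _ _ ?_
      by_contra hg
      exact hks (hs (Finset.mem_Icc.2 (by omega)))

end PDO

namespace PDO

variable {R : Type} [CommRing R] [Algebra ℚ R] {d : R →+ R}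

set_option linter.unusedSectionVars false
set_option maxHeartbeats 1000000

theorem add_coeff (A B : PDO R d) (n : ℤ) : (A + B).coeff n = A.coeff n + B.coeff n := rfl
theorem neg_coeff (A : PDO R d) (n : ℤ) : (-A).coeff n = -(A.coeff n) := rfl
theorem sub_coeff (A B : PDO R d) (n : ℤ) : (A - B).coeff n = A.coeff n - B.coeff n := by
  show (A + -B).coeff n = _
  rw [add_coeff, neg_coeff, sub_eq_add_neg]
theorem smul_coeff (q : ℚ) (A : PDO R d) (n : ℤ) : (q • A).coeff n = q • A.coeff n := rfl
theorem zero_coeff (n : ℤ) : (0 : PDO R d).coeff n = 0 := rfl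
theorem one_coeff (n : ℤ) : (1 : PDO R d).coeff n = if n = 0 then 1 else 0 := rfl
theorem const_coeff (r : R) (n : ℤ) : (const r : PDO R d).coeff n = if n = 0 then r else 0 := rfl

theorem zero_mul' (B : PDO R d) : (0 : PDO R d) * B = 0 := by
  apply ext'; funext n
  obtain ⟨b, hb⟩ := B.bdd
  rw [coeff_mul_eq (0 : PDO R d) B n (a := 0) (fun _ _ => rfl) hb
    (subset_refl _) (subset_refl _), zero_coeff]
  exact Finset.sum_eq_zero fun k _ => Finset.sum_eq_zero fun m _ => tm_zero_left _ _ _ _ _ rfl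

theorem mul_zero' (A : PDO R d) : A * (0 : PDO R d) = 0 := by
  apply ext'; funext n
  obtain ⟨a, ha⟩ := A.bdd
  rw [coeff_mul_eq A 0 n (b := 0) ha (fun _ _ => rfl) (subset_refl _) (subset_refl _), zero_coeff]
  exact Finset.sum_eq_zero fun k _ => Finset.sum_eq_zero fun m _ => tm_zero_right _ _ _ _ _ rfl

theorem coeff_mul_zero_of_gt (A B : PDO R d) {a b : ℤ}
    (ha : ∀ k, a < k → A.coeff k = 0) (hb : ∀ m, b < m → B.coeff m = 0)
    (n : ℤ) (hn : a + b < n) : (A * B).coeff n = 0 := by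
  rw [coeff_mul_eq A B n ha hb (subset_refl _) (subset_refl _)]
  rw [Finset.Icc_eq_empty (by omega), Finset.sum_empty]

theorem coeff_mul_top (A B : PDO R d) {a b : ℤ}
    (ha : ∀ k, a < k → A.coeff k = 0) (hb : ∀ m, b < m → B.coeff m = 0) :
    (A * B).coeff (a + b) = A.coeff a * B.coeff b := by
  rw [coeff_mul_eq A B (a + b) ha hb (subset_refl _) (subset_refl _)]
  have h1 : a + b - b = a := by ring
  have h2 : a + b - a = b := by ring
  rw [h1, h2, Finset.Icc_self, Finset.Icc_self, Finset.sum_singleton, Finset.sum_singleton]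
  unfold tm
  rw [if_pos (by omega)]
  have : (a + b - (a + b)).toNat = 0 := by omega
  rw [this, gbinom_zero, one_smul, Function.iterate_zero_apply]

theorem mul_add' (A B C : PDO R d) : A * (B + C) = A * B + A * C := by
  apply ext'; funext n
  obtain ⟨a, ha⟩ := A.bdd
  obtain ⟨b, hb⟩ := B.bdd
  obtain ⟨c, hc⟩ := C.bdd
  have hb' : ∀ m, max b c < m → B.coeff m = 0 := fun m hm => hb m (by omega)
  have hc' : ∀ m, max b c < m → C.coeff m = 0 := fun m hm => hc m (by omega)
  have hbc : ∀ m, max b c < m → (B + C).coeff m = 0 := fun m hm => by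
    rw [add_coeff, hb' m hm, hc' m hm, add_zero]
  rw [add_coeff,
    coeff_mul_eq A (B + C) n ha hbc (subset_refl _) (subset_refl _),
    coeff_mul_eq A B n ha hb' (subset_refl _) (subset_refl _),
    coeff_mul_eq A C n ha hc' (subset_refl _) (subset_refl _),
    ← Finset.sum_add_distrib]
  apply Finset.sum_congr rfl; intro k _
  rw [← Finset.sum_add_distrib]
  apply Finset.sum_congr rfl; intro m _
  unfold tm
  split
  · rw [add_coeff, iterate_map_add, smul_add, mul_add]
  · rw [add_zero]

theorem add_mul' (A B C : PDO R d) : (A + B) * C = A * C + B * C := by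
  apply ext'; funext n
  obtain ⟨a, ha⟩ := A.bdd
  obtain ⟨b, hb⟩ := B.bdd
  obtain ⟨c, hc⟩ := C.bdd
  have ha' : ∀ m, max a b < m → A.coeff m = 0 := fun m hm => ha m (by omega)
  have hb' : ∀ m, max a b < m → B.coeff m = 0 := fun m hm => hb m (by omega)
  have hab : ∀ m, max a b < m → (A + B).coeff m = 0 := fun m hm => by
    rw [add_coeff, ha' m hm, hb' m hm, add_zero]
  rw [add_coeff,
    coeff_mul_eq (A + B) C n hab hc (subset_refl _) (subset_refl _),
    coeff_mul_eq A C n ha' hc (subset_refl _) (subset_refl _),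
    coeff_mul_eq B C n hb' hc (subset_refl _) (subset_refl _),
    ← Finset.sum_add_distrib]
  apply Finset.sum_congr rfl; intro k _
  rw [← Finset.sum_add_distrib]
  apply Finset.sum_congr rfl; intro m _
  unfold tm
  split
  · rw [add_coeff, add_mul]
  · rw [add_zero]

theorem smul_mul' (q : ℚ) (A B : PDO R d) : (q • A) * B = q • (A * B) := by
  apply ext'; funext n
  obtain ⟨a, ha⟩ := A.bdd
  obtain ⟨b, hb⟩ := B.bdd
  have ha' : ∀ k, a < k → (q • A).coeff k = 0 := fun k hk => by
    rw [smul_coeff, ha k hk, smul_zero]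
  rw [smul_coeff,
    coeff_mul_eq (q • A) B n ha' hb (subset_refl _) (subset_refl _),
    coeff_mul_eq A B n ha hb (subset_refl _) (subset_refl _),
    Finset.smul_sum]
  apply Finset.sum_congr rfl; intro k _
  rw [Finset.smul_sum]
  apply Finset.sum_congr rfl; intro m _
  unfold tm
  split
  · rw [smul_coeff, smul_mul_assoc]
  · rw [smul_zero]

theorem mul_smul' (q : ℚ) (A B : PDO R d) : A * (q • B) = q • (A * B) := by
  apply ext'; funext n
  obtain ⟨a, ha⟩ := A.bdd
  obtain ⟨b, hb⟩ := B.bdd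
  have hb' : ∀ k, b < k → (q • B).coeff k = 0 := fun k hk => by
    rw [smul_coeff, hb k hk, smul_zero]
  rw [smul_coeff,
    coeff_mul_eq A (q • B) n ha hb' (subset_refl _) (subset_refl _),
    coeff_mul_eq A B n ha hb (subset_refl _) (subset_refl _),
    Finset.smul_sum]
  apply Finset.sum_congr rfl; intro k _
  rw [Finset.smul_sum]
  apply Finset.sum_congr rfl; intro m _
  unfold tm
  split
  · rw [smul_coeff]
    have : ∀ j : ℕ, d^[j] (q • B.coeff m) = q • d^[j] (B.coeff m) := by
      intro j
      induction j with
      | zero => rfl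
      | succ j ih => rw [Function.iterate_succ_apply', ih, map_rat_smul,
          Function.iterate_succ_apply']
    rw [this, smul_comm, mul_smul_comm]
  · rw [smul_zero]

end PDO

namespace PDO

variable {R : Type} [CommRing R] [Algebra ℚ R] {d : R →+ R}

set_option linter.unusedSectionVars false
set_option maxHeartbeats 1000000

theorem gbinom_zero_of_pos (l : ℕ) (hl : l ≠ 0) : gbinom 0 l = 0 := by
  unfold gbinom
  rw [Finset.prod_eq_zero (Finset.mem_range.2 (Nat.pos_of_ne_zero hl)) (by simp), zero_div]

theorem d_one (hd : Leibniz d) : d (1 : R) = 0 := by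
  have := hd 1 1
  simp only [one_mul] at this
  have h2 : d 1 + d 1 = 0 + d 1 := by rw [← this, zero_add]
  exact add_right_cancel h2

theorem iterD_one (hd : Leibniz d) (l : ℕ) (hl : l ≠ 0) : d^[l] (1 : R) = 0 := by
  obtain ⟨j, rfl⟩ := Nat.exists_eq_succ_of_ne_zero hl
  rw [Function.iterate_succ_apply, d_one hd, iterD_zero]

theorem iterD_const_mul (hd : Leibniz d) {c : R} (hc : d c = 0) (l : ℕ) (x : R) :
    d^[l] (c * x) = c * d^[l] x := by
  induction l with
  | zero => rfl
  | succ l ih =>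
      rw [Function.iterate_succ_apply', ih, Function.iterate_succ_apply', hd]
      rw [hc, mul_zero, add_zero]

theorem one_bound : ∀ k : ℤ, (0 : ℤ) < k → (1 : PDO R d).coeff k = 0 := by
  intro k hk; rw [one_coeff, if_neg (by omega)]

theorem const_bound (r : R) : ∀ k : ℤ, (0 : ℤ) < k → (const r : PDO R d).coeff k = 0 := by
  intro k hk; rw [const_coeff, if_neg (by omega)]

theorem const_mul_coeff (r : R) (B : PDO R d) (n : ℤ) :
    (const r * B).coeff n = r * B.coeff n := by
  obtain ⟨b, hb⟩ := B.bdd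
  have hb' : ∀ m : ℤ, max b n < m → B.coeff m = 0 := fun m hm => hb m (by omega)
  rw [coeff_mul_eq (const r) B n (a := 0) (const_bound r) hb' (subset_refl _) (subset_refl _)]
  rw [Finset.sum_eq_single_of_mem 0 (Finset.mem_Icc.2 (by omega))]
  · rw [Finset.sum_eq_single_of_mem n (Finset.mem_Icc.2 (by omega))]
    · unfold tm
      rw [if_pos (by omega)]
      have h0 : (0 + n - n).toNat = 0 := by omega
      rw [h0, gbinom_zero, one_smul, Function.iterate_zero_apply, const_coeff, if_pos rfl]
    · intro m _ hm
      unfold tm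
      split
      · rcases lt_or_gt_of_ne hm with h | h
        · omega
        · rw [gbinom_zero_of_pos _ (by omega), zero_smul, mul_zero]
      · rfl
  · intro k _ hk
    exact Finset.sum_eq_zero fun m _ =>
      tm_zero_left _ _ _ _ _ (by rw [const_coeff, if_neg hk])

theorem one_mul' (B : PDO R d) : (1 : PDO R d) * B = B := by
  have h : (1 : PDO R d) = const 1 := by
    apply ext'; funext n; rfl
  apply ext'; funext n
  rw [h, const_mul_coeff, one_mul]

theorem const_mul_left (r : R) (A B : PDO R d) :
    (const r * A) * B = const r * (A * B) := by
  apply ext'; funext n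
  obtain ⟨a, ha⟩ := A.bdd
  obtain ⟨b, hb⟩ := B.bdd
  have ha' : ∀ k : ℤ, a < k → (const r * A).coeff k = 0 := fun k hk => by
    rw [const_mul_coeff, ha k hk, mul_zero]
  rw [const_mul_coeff,
    coeff_mul_eq (const r * A) B n ha' hb (subset_refl _) (subset_refl _),
    coeff_mul_eq A B n ha hb (subset_refl _) (subset_refl _), Finset.mul_sum]
  apply Finset.sum_congr rfl; intro k _
  rw [Finset.mul_sum]
  apply Finset.sum_congr rfl; intro m _
  unfold tm
  split
  · rw [const_mul_coeff, mul_assoc]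
  · rw [mul_zero]

theorem const_mul_right (hd : Leibniz d) {c : R} (hc : d c = 0) (A B : PDO R d) :
    A * (const c * B) = const c * (A * B) := by
  apply ext'; funext n
  obtain ⟨a, ha⟩ := A.bdd
  obtain ⟨b, hb⟩ := B.bdd
  have hb' : ∀ k : ℤ, b < k → (const c * B).coeff k = 0 := fun k hk => by
    rw [const_mul_coeff, hb k hk, mul_zero]
  rw [const_mul_coeff,
    coeff_mul_eq A (const c * B) n ha hb' (subset_refl _) (subset_refl _),
    coeff_mul_eq A B n ha hb (subset_refl _) (subset_refl _), Finset.mul_sum]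
  apply Finset.sum_congr rfl; intro k _
  rw [Finset.mul_sum]
  apply Finset.sum_congr rfl; intro m _
  unfold tm
  split
  · rw [const_mul_coeff, iterD_const_mul hd hc, mul_smul_comm, mul_left_comm,
      mul_smul_comm, mul_smul_comm]
  · rw [mul_zero]

theorem mul_one' (hd : Leibniz d) (A : PDO R d) : A * (1 : PDO R d) = A := by
  apply ext'; funext n
  obtain ⟨a, ha⟩ := A.bdd
  have ha' : ∀ k : ℤ, max a n < k → A.coeff k = 0 := fun k hk => ha k (by omega)
  have h1 : (1 : PDO R d).coeff 0 = 1 := rfl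
  rw [coeff_mul_eq A 1 n (b := 0) ha' one_bound (subset_refl _) (subset_refl _)]
  rw [Finset.sum_eq_single_of_mem n (Finset.mem_Icc.2 (by omega))]
  · rw [Finset.sum_eq_single_of_mem 0 (Finset.mem_Icc.2 (by omega))]
    · unfold tm
      rw [if_pos (by omega)]
      have h0 : (n + 0 - n).toNat = 0 := by omega
      rw [h0, gbinom_zero, one_smul, Function.iterate_zero_apply, h1, mul_one]
    · intro m _ hm
      exact tm_zero_right _ _ _ _ _ (by rw [one_coeff, if_neg hm])
  · intro k _ hk
    apply Finset.sum_eq_zero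
    intro m _
    by_cases hm0 : m = 0
    · subst hm0
      by_cases hkn : k < n
      · exact tm_zero_guard _ _ _ _ _ (by omega)
      · unfold tm
        rw [if_pos (by omega), h1, iterD_one hd _ (by omega), smul_zero, mul_zero]
    · exact tm_zero_right _ _ _ _ _ (by rw [one_coeff, if_neg hm0])

end PDO

namespace PDO

variable {R : Type} [CommRing R] [Algebra ℚ R] {d : R →+ R}

set_option linter.unusedSectionVars false
set_option maxHeartbeats 1000000

open Finset in
theorem iterD_mul (hd : Leibniz d) {n : ℕ} (p q : R) :
    d^[n] (p * q) =
      ∑ k ∈ range n.succ, (n.choose k • (d^[n - k] p * d^[k] q)) := by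
  have hd' : ∀ x y : R, d (x * y) = d x * y + x * d y := fun x y => by
    rw [hd x y]; ring
  induction n with
  | zero =>
    simp [Finset.range]
  | succ n IH =>
    calc
      d^[n + 1] (p * q) =
          d (∑ k ∈ range n.succ,
              n.choose k • (d^[n - k] p * d^[k] q)) := by
        rw [Function.iterate_succ_apply', IH]
      _ = (∑ k ∈ range n.succ,
            n.choose k • (d^[n - k + 1] p * d^[k] q)) +
          ∑ k ∈ range n.succ,
            n.choose k • (d^[n - k] p * d^[k + 1] q) := by
        simp_rw [map_sum, AddMonoidHom.map_nsmul, hd', Function.iterate_succ_apply',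
          smul_add, sum_add_distrib]
      _ = (∑ k ∈ range n.succ,
                n.choose k.succ • (d^[n - k] p * d^[k + 1] q)) +
              1 • (d^[n + 1] p * d^[0] q) +
            ∑ k ∈ range n.succ, n.choose k • (d^[n - k] p * d^[k + 1] q) :=
        ?_
      _ = ((∑ k ∈ range n.succ, n.choose k • (d^[n - k] p * d^[k + 1] q)) +
              ∑ k ∈ range n.succ,
                n.choose k.succ • (d^[n - k] p * d^[k + 1] q)) +
            1 • (d^[n + 1] p * d^[0] q) := by
        rw [add_comm, add_assoc]
      _ = (∑ i ∈ range n.succ,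
              (n + 1).choose (i + 1) • (d^[n + 1 - (i + 1)] p * d^[i + 1] q)) +
            1 • (d^[n + 1] p * d^[0] q) := by
        simp_rw [Nat.choose_succ_succ, Nat.succ_sub_succ, add_smul, sum_add_distrib]
      _ = ∑ k ∈ range n.succ.succ,
            n.succ.choose k • (d^[n.succ - k] p * d^[k] q) := by
        rw [sum_range_succ' _ n.succ, Nat.choose_zero_right, tsub_zero]
    congr
    refine (sum_range_succ' _ _).trans (congr_arg₂ (· + ·) ?_ ?_)
    · rw [sum_range_succ, Nat.choose_succ_self, zero_smul, add_zero]
      refine sum_congr rfl fun k hk => ?_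
      rw [mem_range] at hk
      congr
      omega
    · rw [Nat.choose_zero_right, tsub_zero]

end PDO

namespace PDO

variable {R : Type} [CommRing R] [Algebra ℚ R] {d : R →+ R}

set_option linter.unusedSectionVars false
set_option maxHeartbeats 4000000

theorem iterD_sum {ι : Type} (j : ℕ) (s : Finset ι) (f : ι → R) :
    d^[j] (∑ x ∈ s, f x) = ∑ x ∈ s, d^[j] (f x) := by
  induction j with
  | zero => rfl
  | succ j ih =>
      rw [Function.iterate_succ_apply', ih, map_sum]
      simp only [Function.iterate_succ_apply']

theorem iterD_rat_smul (q : ℚ) (j : ℕ) (x : R) : d^[j] (q • x) = q • d^[j] x := by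
  induction j with
  | zero => rfl
  | succ j ih => rw [Function.iterate_succ_apply', ih, map_rat_smul,
      Function.iterate_succ_apply']

/-- Normal form for triple-product terms. -/
def NF (A B C : PDO R d) (k m p : ℤ) (α β : ℕ) (x : ℚ) : R :=
  x • (A.coeff k * (d^[α] (B.coeff m) * d^[β] (C.coeff p)))

theorem norm2 (A B C : PDO R d) (k m p : ℤ) (α β : ℕ) (x y : ℚ) :
    (A.coeff k * (x • d^[α] (B.coeff m))) * (y • d^[β] (C.coeff p))
      = NF A B C k m p α β (x * y) := by
  unfold NF
  simp only [mul_smul_comm, smul_mul_assoc, smul_smul, mul_assoc]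
  rw [mul_comm y x]

theorem norm3 (A B C : PDO R d) (k m p : ℤ) (α β : ℕ) (x z : ℚ) (i : ℕ) :
    A.coeff k * (x • (i • (d^[α] (B.coeff m) * (z • d^[β] (C.coeff p)))))
      = NF A B C k m p α β (x * i * z) := by
  unfold NF
  rw [← Nat.cast_smul_eq_nsmul ℚ i]
  simp only [mul_smul_comm, smul_mul_assoc, smul_smul, mul_assoc]

theorem sum4_comm {M : Type} [AddCommMonoid M] (s₁ s₂ s₃ s₄ : Finset ℤ)
    (f : ℤ → ℤ → ℤ → ℤ → M) :
    (∑ q ∈ s₁, ∑ p ∈ s₂, ∑ k ∈ s₃, ∑ m ∈ s₄, f q p k m)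
      = ∑ k ∈ s₃, ∑ m ∈ s₄, ∑ p ∈ s₂, ∑ q ∈ s₁, f q p k m :=
  calc (∑ q ∈ s₁, ∑ p ∈ s₂, ∑ k ∈ s₃, ∑ m ∈ s₄, f q p k m)
      = ∑ p ∈ s₂, ∑ q ∈ s₁, ∑ k ∈ s₃, ∑ m ∈ s₄, f q p k m := Finset.sum_comm
    _ = ∑ p ∈ s₂, ∑ k ∈ s₃, ∑ q ∈ s₁, ∑ m ∈ s₄, f q p k m :=
        Finset.sum_congr rfl fun p _ => Finset.sum_comm
    _ = ∑ p ∈ s₂, ∑ k ∈ s₃, ∑ m ∈ s₄, ∑ q ∈ s₁, f q p k m :=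
        Finset.sum_congr rfl fun p _ => Finset.sum_congr rfl fun k _ => Finset.sum_comm
    _ = ∑ k ∈ s₃, ∑ p ∈ s₂, ∑ m ∈ s₄, ∑ q ∈ s₁, f q p k m := Finset.sum_comm
    _ = ∑ k ∈ s₃, ∑ m ∈ s₄, ∑ p ∈ s₂, ∑ q ∈ s₁, f q p k m :=
        Finset.sum_congr rfl fun k _ => Finset.sum_comm

theorem sum3_comm {M : Type} [AddCommMonoid M] (s₁ s₂ s₃ : Finset ℤ)
    (f : ℤ → ℤ → ℤ → M) :
    (∑ r ∈ s₁, ∑ m ∈ s₂, ∑ p ∈ s₃, f r m p)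
      = ∑ m ∈ s₂, ∑ p ∈ s₃, ∑ r ∈ s₁, f r m p :=
  calc (∑ r ∈ s₁, ∑ m ∈ s₂, ∑ p ∈ s₃, f r m p)
      = ∑ m ∈ s₂, ∑ r ∈ s₁, ∑ p ∈ s₃, f r m p := Finset.sum_comm
    _ = ∑ m ∈ s₂, ∑ p ∈ s₃, ∑ r ∈ s₁, f r m p :=
        Finset.sum_congr rfl fun m _ => Finset.sum_comm

end PDO

namespace PDO

variable {R : Type} [CommRing R] [Algebra ℚ R] {d : R →+ R}

set_option linter.unusedSectionVars false
set_option linter.unusedVariables false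
set_option maxHeartbeats 4000000

theorem fiber (A B C : PDO R d) (n k m p a b c : ℤ)
    (hk : k ≤ a) (hm : m ≤ b) (hp : p ≤ c) :
    (∑ q ∈ Finset.Icc (n - c) (a + b),
      if 0 ≤ q + p - n then (if 0 ≤ k + m - q then
        NF A B C k m p (k + m - q).toNat (q + p - n).toNat
          (gbinom k (k + m - q).toNat * gbinom q (q + p - n).toNat)
        else 0) else 0)
    = ∑ r ∈ Finset.Icc (n - a) (b + c),
        if 0 ≤ k + r - n then (if 0 ≤ m + p - r then
          ∑ i ∈ Finset.range ((k + r - n).toNat + 1),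
            NF A B C k m p ((k + r - n).toNat - i) (i + (m + p - r).toNat)
              (gbinom k (k + r - n).toNat * (((k + r - n).toNat.choose i : ℚ))
                * gbinom m (m + p - r).toNat)
          else 0) else 0 := by
  by_cases hL0 : 0 ≤ k + m + p - n
  case neg =>
    rw [Finset.sum_eq_zero, Finset.sum_eq_zero]
    · intro r _
      split_ifs with h1 h2
      · exact absurd (by omega : (0:ℤ) ≤ k + m + p - n) hL0
      · rfl
      · rfl
    · intro q _
      split_ifs with h1 h2
      · exact absurd (by omega : (0:ℤ) ≤ k + m + p - n) hL0
      · rfl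
      · rfl
  case pos =>
    set L : ℕ := (k + m + p - n).toNat with hLdef
    have hLL : k + m + p - n = (L : ℤ) := by omega
    -- LHS
    have lhs1 : (∑ q ∈ Finset.Icc (n - c) (a + b),
        if 0 ≤ q + p - n then (if 0 ≤ k + m - q then
          NF A B C k m p (k + m - q).toNat (q + p - n).toNat
            (gbinom k (k + m - q).toNat * gbinom q (q + p - n).toNat)
          else 0) else 0)
        = ∑ q ∈ Finset.Icc (n - p) (k + m),
          if 0 ≤ q + p - n then (if 0 ≤ k + m - q then
            NF A B C k m p (k + m - q).toNat (q + p - n).toNat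
              (gbinom k (k + m - q).toNat * gbinom q (q + p - n).toNat)
            else 0) else 0 := by
      refine (Finset.sum_subset (Finset.Icc_subset_Icc (by omega) (by omega)) ?_).symm
      intro q hq1 hq2
      rw [Finset.mem_Icc] at hq1
      split_ifs with h1 h2
      · exact absurd (Finset.mem_Icc.2 (by omega)) hq2
      · rfl
      · rfl
    have lhs2 : (∑ q ∈ Finset.Icc (n - p) (k + m),
        if 0 ≤ q + p - n then (if 0 ≤ k + m - q then
          NF A B C k m p (k + m - q).toNat (q + p - n).toNat
            (gbinom k (k + m - q).toNat * gbinom q (q + p - n).toNat)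
          else 0) else 0)
        = ∑ α ∈ Finset.range (L + 1),
            NF A B C k m p α (L - α) (gbinom k α * gbinom (k + m - (α:ℤ)) (L - α)) := by
      refine Finset.sum_nbij' (fun q => (k + m - q).toNat) (fun α => k + m - (α : ℤ))
        ?_ ?_ ?_ ?_ ?_
      · intro q hq; rw [Finset.mem_Icc] at hq; rw [Finset.mem_range]; omega
      · intro α hα; rw [Finset.mem_range] at hα; rw [Finset.mem_Icc]; omega
      · intro q hq; rw [Finset.mem_Icc] at hq; omega
      · intro α hα; rw [Finset.mem_range] at hα; omega
      · intro q hq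
        rw [Finset.mem_Icc] at hq
        rw [if_pos (by omega), if_pos (by omega)]
        have h1 : (q + p - n).toNat = L - (k + m - q).toNat := by omega
        have h2 : q = k + m - ((k + m - q).toNat : ℤ) := by omega
        have h3 : gbinom q (L - (k + m - q).toNat)
            = gbinom (k + m - (((k + m - q).toNat : ℤ))) (L - (k + m - q).toNat) := by
          rw [← h2]
        rw [h1, h3]
    -- RHS
    have rhs1 : (∑ r ∈ Finset.Icc (n - a) (b + c),
        if 0 ≤ k + r - n then (if 0 ≤ m + p - r then
          ∑ i ∈ Finset.range ((k + r - n).toNat + 1),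
            NF A B C k m p ((k + r - n).toNat - i) (i + (m + p - r).toNat)
              (gbinom k (k + r - n).toNat * (((k + r - n).toNat.choose i : ℚ))
                * gbinom m (m + p - r).toNat)
          else 0) else 0)
        = ∑ r ∈ Finset.Icc (n - k) (m + p),
          if 0 ≤ k + r - n then (if 0 ≤ m + p - r then
            ∑ i ∈ Finset.range ((k + r - n).toNat + 1),
              NF A B C k m p ((k + r - n).toNat - i) (i + (m + p - r).toNat)
                (gbinom k (k + r - n).toNat * (((k + r - n).toNat.choose i : ℚ))
                  * gbinom m (m + p - r).toNat)
            else 0) else 0 := by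
      refine (Finset.sum_subset (Finset.Icc_subset_Icc (by omega) (by omega)) ?_).symm
      intro r hr1 hr2
      rw [Finset.mem_Icc] at hr1
      split_ifs with h1 h2
      · exact absurd (Finset.mem_Icc.2 (by omega)) hr2
      · rfl
      · rfl
    have rhs2 : (∑ r ∈ Finset.Icc (n - k) (m + p),
        if 0 ≤ k + r - n then (if 0 ≤ m + p - r then
          ∑ i ∈ Finset.range ((k + r - n).toNat + 1),
            NF A B C k m p ((k + r - n).toNat - i) (i + (m + p - r).toNat)
              (gbinom k (k + r - n).toNat * (((k + r - n).toNat.choose i : ℚ))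
                * gbinom m (m + p - r).toNat)
          else 0) else 0)
        = ∑ s ∈ Finset.range (L + 1),
            ∑ i ∈ Finset.range ((L - s) + 1),
              NF A B C k m p ((L - s) - i) (i + s)
                (gbinom k (L - s) * (((L - s).choose i : ℚ)) * gbinom m s) := by
      refine Finset.sum_nbij' (fun r => (m + p - r).toNat) (fun s => m + p - (s : ℤ))
        ?_ ?_ ?_ ?_ ?_
      · intro r hr; rw [Finset.mem_Icc] at hr; rw [Finset.mem_range]; omega
      · intro s hs; rw [Finset.mem_range] at hs; rw [Finset.mem_Icc]; omega
      · intro r hr; rw [Finset.mem_Icc] at hr; omega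
      · intro s hs; rw [Finset.mem_range] at hs; omega
      · intro r hr
        rw [Finset.mem_Icc] at hr
        rw [if_pos (by omega), if_pos (by omega)]
        have h1 : (k + r - n).toNat = L - (m + p - r).toNat := by omega
        rw [h1]
    have rhs3 : ∀ s ∈ Finset.range (L + 1),
        (∑ i ∈ Finset.range ((L - s) + 1),
          NF A B C k m p ((L - s) - i) (i + s)
            (gbinom k (L - s) * (((L - s).choose i : ℚ)) * gbinom m s))
        = ∑ α ∈ Finset.range (L + 1),
            NF A B C k m p α (L - α)
              (gbinom k (L - s) * (((L - s).choose α : ℚ)) * gbinom m s) := by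
      intro s hs
      rw [Finset.mem_range] at hs
      have base : (∑ i ∈ Finset.range ((L - s) + 1),
          NF A B C k m p ((L - s) - i) (i + s)
            (gbinom k (L - s) * (((L - s).choose i : ℚ)) * gbinom m s))
          = ∑ α ∈ Finset.range ((L - s) + 1),
            NF A B C k m p α (L - α)
              (gbinom k (L - s) * (((L - s).choose α : ℚ)) * gbinom m s) := by
        refine Finset.sum_nbij' (fun i => (L - s) - i) (fun α => (L - s) - α)
          ?_ ?_ ?_ ?_ ?_
        · intro i hi; rw [Finset.mem_range] at hi ⊢; omega
        · intro i hi; rw [Finset.mem_range] at hi ⊢; omega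
        · intro i hi; rw [Finset.mem_range] at hi; omega
        · intro i hi; rw [Finset.mem_range] at hi; omega
        · intro i hi
          rw [Finset.mem_range] at hi
          have h1 : i + s = L - ((L - s) - i) := by omega
          have h2 : (L - s).choose i = (L - s).choose ((L - s) - i) :=
            (Nat.choose_symm (by omega)).symm
          rw [h1, h2]
      rw [base]
      refine Finset.sum_subset (by intro x hx; rw [Finset.mem_range] at hx ⊢; omega) ?_
      intro α hα1 hα2
      rw [Finset.mem_range] at hα1 hα2
      unfold NF
      rw [Nat.choose_eq_zero_of_lt (by omega)]
      norm_num
    rw [lhs1, lhs2, rhs1, rhs2, Finset.sum_congr rfl rhs3, Finset.sum_comm]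
    apply Finset.sum_congr rfl
    intro α hα
    rw [Finset.mem_range] at hα
    unfold NF
    rw [← Finset.sum_smul]
    congr 1
    have := gbinom_key k m α L (by omega)
    rw [← this]
    apply Finset.sum_congr rfl
    intro s _
    ring
end PDO

namespace PDO

variable {R : Type} [CommRing R] [Algebra ℚ R] {d : R →+ R}

set_option linter.unusedSectionVars false
set_option linter.unusedVariables false
set_option maxHeartbeats 4000000

theorem mul_assoc' (hd : Leibniz d) (A B C : PDO R d) : A * B * C = A * (B * C) := by
  apply ext'; funext n
  obtain ⟨a, ha⟩ := A.bdd
  obtain ⟨b, hb⟩ := B.bdd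
  obtain ⟨c, hc⟩ := C.bdd
  have hab : ∀ k : ℤ, a + b < k → (A * B).coeff k = 0 := fun k hk =>
    coeff_mul_zero_of_gt A B ha hb k hk
  have hbc : ∀ k : ℤ, b + c < k → (B * C).coeff k = 0 := fun k hk =>
    coeff_mul_zero_of_gt B C hb hc k hk
  have hLHS1 : (A * B * C).coeff n
      = ∑ q ∈ Finset.Icc (n - c) (a + b), ∑ p ∈ Finset.Icc (n - a - b) c,
          ∑ k ∈ Finset.Icc (n - b - c) a, ∑ m ∈ Finset.Icc (n - a - c) b,
          (if 0 ≤ q + p - n then (if 0 ≤ k + m - q then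
            NF A B C k m p (k + m - q).toNat (q + p - n).toNat
              (gbinom k (k + m - q).toNat * gbinom q (q + p - n).toNat)
            else 0) else 0) := by
    rw [coeff_mul_eq (A * B) C n hab hc
      (s := Finset.Icc (n - c) (a + b)) (t := Finset.Icc (n - a - b) c)
      (Finset.Icc_subset_Icc (by omega) (by omega))
      (Finset.Icc_subset_Icc (by omega) (by omega))]
    apply Finset.sum_congr rfl; intro q hq
    apply Finset.sum_congr rfl; intro p hp
    rw [Finset.mem_Icc] at hq hp
    by_cases h1 : 0 ≤ q + p - n
    · unfold tm
      simp only [if_pos h1]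
      rw [coeff_mul_eq A B q ha hb
        (s := Finset.Icc (n - b - c) a) (t := Finset.Icc (n - a - c) b)
        (Finset.Icc_subset_Icc (by omega) (by omega))
        (Finset.Icc_subset_Icc (by omega) (by omega)), Finset.sum_mul]
      apply Finset.sum_congr rfl; intro k hk
      rw [Finset.sum_mul]
      apply Finset.sum_congr rfl; intro m hm
      unfold tm
      by_cases h2 : 0 ≤ k + m - q
      · simp only [if_pos h2]
        exact norm2 A B C k m p (k + m - q).toNat (q + p - n).toNat _ _
      · simp only [if_neg h2, zero_mul]
    · unfold tm
      simp only [if_neg h1]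
      exact (Finset.sum_eq_zero fun k _ => Finset.sum_eq_zero fun m _ => rfl).symm
  have hLHS : (A * B * C).coeff n
      = ∑ k ∈ Finset.Icc (n - b - c) a, ∑ m ∈ Finset.Icc (n - a - c) b,
          ∑ p ∈ Finset.Icc (n - a - b) c, ∑ q ∈ Finset.Icc (n - c) (a + b),
          (if 0 ≤ q + p - n then (if 0 ≤ k + m - q then
            NF A B C k m p (k + m - q).toNat (q + p - n).toNat
              (gbinom k (k + m - q).toNat * gbinom q (q + p - n).toNat)
            else 0) else 0) := hLHS1.trans (sum4_comm _ _ _ _ _)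
  have hRHS1 : (A * (B * C)).coeff n
      = ∑ k ∈ Finset.Icc (n - b - c) a, ∑ r ∈ Finset.Icc (n - a) (b + c),
          ∑ m ∈ Finset.Icc (n - a - c) b, ∑ p ∈ Finset.Icc (n - a - b) c,
          (if 0 ≤ k + r - n then (if 0 ≤ m + p - r then
            ∑ i ∈ Finset.range ((k + r - n).toNat + 1),
              NF A B C k m p ((k + r - n).toNat - i) (i + (m + p - r).toNat)
                (gbinom k (k + r - n).toNat * (((k + r - n).toNat.choose i : ℚ))
                  * gbinom m (m + p - r).toNat)
            else 0) else 0) := by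
    rw [coeff_mul_eq A (B * C) n ha hbc
      (s := Finset.Icc (n - b - c) a) (t := Finset.Icc (n - a) (b + c))
      (Finset.Icc_subset_Icc (by omega) (by omega))
      (Finset.Icc_subset_Icc (by omega) (by omega))]
    apply Finset.sum_congr rfl; intro k hk
    apply Finset.sum_congr rfl; intro r hr
    rw [Finset.mem_Icc] at hk hr
    by_cases h1 : 0 ≤ k + r - n
    · unfold tm
      simp only [if_pos h1]
      rw [coeff_mul_eq B C r hb hc
        (s := Finset.Icc (n - a - c) b) (t := Finset.Icc (n - a - b) c)
        (Finset.Icc_subset_Icc (by omega) (by omega))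
        (Finset.Icc_subset_Icc (by omega) (by omega))]
      rw [iterD_sum]
      simp only [iterD_sum, Finset.smul_sum, Finset.mul_sum]
      apply Finset.sum_congr rfl; intro m hm
      apply Finset.sum_congr rfl; intro p hp
      unfold tm
      by_cases h2 : 0 ≤ m + p - r
      · simp only [if_pos h2]
        rw [iterD_mul hd]
        simp only [iterD_rat_smul, ← Function.iterate_add_apply]
        simp only [Finset.smul_sum, Finset.mul_sum]
        apply Finset.sum_congr rfl; intro i hi
        rw [Finset.mem_range] at hi
        exact norm3 A B C k m p ((k + r - n).toNat - i) (i + (m + p - r).toNat)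
          _ _ ((k + r - n).toNat.choose i)
      · simp only [if_neg h2, iterD_zero, smul_zero, mul_zero]
    · unfold tm
      simp only [if_neg h1]
      exact (Finset.sum_eq_zero fun m _ => Finset.sum_eq_zero fun p _ => rfl).symm
  have hRHS : (A * (B * C)).coeff n
      = ∑ k ∈ Finset.Icc (n - b - c) a, ∑ m ∈ Finset.Icc (n - a - c) b,
          ∑ p ∈ Finset.Icc (n - a - b) c, ∑ r ∈ Finset.Icc (n - a) (b + c),
          (if 0 ≤ k + r - n then (if 0 ≤ m + p - r then
            ∑ i ∈ Finset.range ((k + r - n).toNat + 1),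
              NF A B C k m p ((k + r - n).toNat - i) (i + (m + p - r).toNat)
                (gbinom k (k + r - n).toNat * (((k + r - n).toNat.choose i : ℚ))
                  * gbinom m (m + p - r).toNat)
            else 0) else 0) :=
    hRHS1.trans (Finset.sum_congr rfl fun k _ => sum3_comm _ _ _ _)
  rw [hLHS, hRHS]
  apply Finset.sum_congr rfl; intro k hk
  apply Finset.sum_congr rfl; intro m hm
  apply Finset.sum_congr rfl; intro p hp
  rw [Finset.mem_Icc] at hk hm hp
  exact fiber A B C n k m p a b c hk.2 hm.2 hp.2

end PDO

namespace PDO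

variable {R : Type} [CommRing R] [Algebra ℚ R] {d : R →+ R}

set_option linter.unusedSectionVars false
set_option linter.unusedVariables false
set_option maxHeartbeats 1000000

theorem exists_max_support (D : PDO R d) (hD : D ≠ 0) :
    ∃ n : ℤ, D.coeff n ≠ 0 ∧ ∀ k, n < k → D.coeff k = 0 := by
  have hne : ∃ z : ℤ, D.coeff z ≠ 0 := by
    by_contra hz
    push_neg at hz
    exact hD (ext' (funext fun n => hz n))
  obtain ⟨N, hN⟩ := D.bdd
  have hbdd : ∃ b : ℤ, ∀ z : ℤ, D.coeff z ≠ 0 → z ≤ b :=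
    ⟨N, fun z hz => by by_contra hzz; exact hz (hN z (by omega))⟩
  obtain ⟨lub, hlub1, hlub2⟩ := Int.exists_greatest_of_bdd hbdd hne
  exact ⟨lub, hlub1, fun k hk => by
    by_contra hkk
    exact absurd (hlub2 k hkk) (by omega)⟩

theorem smul_cancel {q : ℚ} (hq : q ≠ 0) {x : R} (h : q • x = 0) : x = 0 := by
  have := congrArg (fun y => q⁻¹ • y) h
  simpa [smul_smul, inv_mul_cancel₀ hq] using this

theorem unit_mul_cancel (h : Rˣ) {x : R} (e : (h : R) * x = 0) : x = 0 := by
  have := congrArg (fun y => ((h⁻¹ : Rˣ) : R) * y) e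
  simpa [← mul_assoc] using this

theorem mul_neg' (A B : PDO R d) : A * (-B) = -(A * B) := by
  have h1 : -B = (-1 : ℚ) • B := ext' (funext fun n => by
    rw [neg_coeff, smul_coeff, neg_one_smul])
  have h2 : -(A * B) = (-1 : ℚ) • (A * B) := ext' (funext fun n => by
    rw [neg_coeff, smul_coeff, neg_one_smul])
  rw [h1, h2, mul_smul']

theorem neg_mul' (A B : PDO R d) : (-A) * B = -(A * B) := by
  have h1 : -A = (-1 : ℚ) • A := ext' (funext fun n => by
    rw [neg_coeff, smul_coeff, neg_one_smul])
  have h2 : -(A * B) = (-1 : ℚ) • (A * B) := ext' (funext fun n => by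
    rw [neg_coeff, smul_coeff, neg_one_smul])
  rw [h1, h2, smul_mul']

theorem mul_sub' (A B C : PDO R d) : A * (B - C) = A * B - A * C := by
  have h : B - C = B + (-C) := rfl
  rw [h, mul_add', mul_neg']
  rfl

theorem sub_mul' (A B C : PDO R d) : (A - B) * C = A * C - B * C := by
  have h : A - B = A + (-B) := rfl
  rw [h, add_mul', neg_mul']
  rfl

/-- Top order cancellation: if `X D + D Y = 0` with `X, Y` of order one with invertible
leading coefficient and `D` of order `≤ 0`, then `D = 0`. -/
theorem top_cancel (h : Rˣ) (X Y D : PDO R d)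
    (hX1 : X.coeff 1 = (h : R)) (hX2 : ∀ k : ℤ, 1 < k → X.coeff k = 0)
    (hY1 : Y.coeff 1 = (h : R)) (hY2 : ∀ k : ℤ, 1 < k → Y.coeff k = 0)
    (hD0 : ∀ k : ℤ, 0 < k → D.coeff k = 0)
    (heq : X * D + D * Y = 0) : D = 0 := by
  by_contra hD
  obtain ⟨n, hn1, hn2⟩ := exists_max_support D hD
  have hn0 : n ≤ 0 := by
    by_contra hn0
    exact hn1 (hD0 n (by omega))
  have e1 : (X * D).coeff (1 + n) = (h : R) * D.coeff n := by
    rw [coeff_mul_top X D hX2 hn2, hX1]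
  have e2 : (D * Y).coeff (n + 1) = D.coeff n * (h : R) := by
    rw [coeff_mul_top D Y hn2 hY2, hY1]
  have e3 : (X * D + D * Y).coeff (1 + n) = 0 := by rw [heq]; rfl
  rw [add_coeff, e1, show (1 + n : ℤ) = n + 1 by ring, e2] at e3
  have e4 : (2 : ℚ) • ((h : R) * D.coeff n) = 0 := by
    have : (2 : ℚ) • ((h : R) * D.coeff n)
        = (h : R) * D.coeff n + D.coeff n * (h : R) := by
      rw [mul_comm (D.coeff n) (h : R), two_smul]
    rw [this, e3]
  exact hn1 (unit_mul_cancel h (smul_cancel (by norm_num) e4))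

theorem inv_bound (h : Rˣ) (M Minv : PDO R d)
    (hM1 : M.coeff 1 = (h : R)) (hM2 : ∀ k : ℤ, 1 < k → M.coeff k = 0)
    (hMinv : M * Minv = 1) : ∀ k : ℤ, -1 < k → Minv.coeff k = 0 := by
  intro k0 hk0
  by_contra hne
  have hD : Minv ≠ 0 := fun hz => hne (by rw [hz]; rfl)
  obtain ⟨n, hn1, hn2⟩ := exists_max_support Minv hD
  have hkn : k0 ≤ n := by
    by_contra hkn
    exact hne (hn2 k0 (by omega))
  have e1 : (M * Minv).coeff (1 + n) = (h : R) * Minv.coeff n := by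
    rw [coeff_mul_top M Minv hM2 hn2, hM1]
  rw [hMinv, one_coeff, if_neg (by omega)] at e1
  exact hn1 (unit_mul_cancel h e1.symm)

theorem pow_succ' (A : PDO R d) (n : ℕ) : A ^ (n + 1) = A ^ n * A := rfl
theorem pow_zero' (A : PDO R d) : A ^ 0 = (1 : PDO R d) := rfl

theorem mul_pow_comm (hd : Leibniz d) (M : PDO R d) (n : ℕ) :
    M * M ^ n = M ^ n * M := by
  induction n with
  | zero => rw [pow_zero', one_mul', mul_one' hd]
  | succ n ih => rw [pow_succ', ← mul_assoc' hd, ih]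

theorem inv_mul_pow (hd : Leibniz d) (M Minv : PDO R d) (hinv : Minv * M = 1) (n : ℕ) :
    Minv * M ^ (n + 1) = M ^ n := by
  rw [pow_succ', ← mul_pow_comm hd, ← mul_assoc' hd, hinv, one_mul']

theorem pow_mul_inv (hd : Leibniz d) (M Minv : PDO R d) (hinv : M * Minv = 1) (n : ℕ) :
    M ^ (n + 1) * Minv = M ^ n := by
  rw [pow_succ', mul_assoc' hd, hinv, mul_one' hd]

theorem neg_add_smul_neg (q : ℚ) (Z : PDO R d) :
    -Z + -(q • Z) = -((q + 1) • Z) := by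
  apply ext'; funext n
  rw [add_coeff, neg_coeff, neg_coeff, neg_coeff, smul_coeff, smul_coeff, add_smul, one_smul]
  abel

theorem smul_zero' (q : ℚ) : (q • (0 : PDO R d)) = 0 :=
  ext' (funext fun n => by rw [smul_coeff, zero_coeff, smul_zero])

theorem const_add (x y : R) : (const x : PDO R d) + const y = const (x + y) := by
  apply ext'; funext n
  rw [add_coeff, const_coeff, const_coeff, const_coeff]
  split <;> simp

end PDO

namespace EPDO

variable {R : Type} [CommRing R] [Algebra ℚ R] {d : R →+ R}

set_option linter.unusedSectionVars false
set_option linter.unusedVariables false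

theorem ext2 {A B : EPDO R d} (h1 : A.re = B.re) (h2 : A.im = B.im) : A = B := by
  cases A; cases B; cases h1; cases h2; rfl

theorem mul_re (A B : EPDO R d) : (A * B).re = A.re * B.re := rfl
theorem mul_im (A B : EPDO R d) : (A * B).im = A.re * B.im + A.im * B.re := rfl
theorem sub_re (A B : EPDO R d) : (A - B).re = A.re - B.re := rfl
theorem sub_im (A B : EPDO R d) : (A - B).im = A.im - B.im := rfl
theorem smul_re (q : ℚ) (A : EPDO R d) : (q • A).re = q • A.re := rfl
theorem smul_im (q : ℚ) (A : EPDO R d) : (q • A).im = q • A.im := rfl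
theorem epow_succ (A : EPDO R d) (n : ℕ) : A ^ (n + 1) = A ^ n * A := rfl
theorem epow_one (A : EPDO R d) : A ^ 1 = (1 : EPDO R d) * A := rfl

theorem eps_mul_lift (X : PDO R d) : eps * lift X = ⟨0, X⟩ := by
  refine ext2 ?_ ?_
  · show (0 : PDO R d) * X = 0
    exact PDO.zero_mul' X
  · show (0 : PDO R d) * 0 + 1 * X = X
    rw [PDO.mul_zero', PDO.one_mul', zero_add]

theorem lift_sub_pair (X Y : PDO R d) : lift X - ⟨0, Y⟩ = ⟨X, -Y⟩ := by
  refine ext2 ?_ ?_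
  · show X - 0 = X
    rw [sub_zero]
  · show (0 : PDO R d) - Y = -Y
    rw [zero_sub]

theorem smul_lift (q : ℚ) (X : PDO R d) : q • lift X = lift (q • X) := by
  refine ext2 rfl ?_
  show q • (0 : PDO R d) = 0
  exact PDO.smul_zero' q

end EPDO

set_option linter.unusedSectionVars false
set_option linter.unusedVariables false
set_option maxHeartbeats 1000000

/-- For `L̃ := L − 2εc` (with `∂c = 0`) the unique square root of the form `h∂ + (order ≤ 0)`
is `L^(1/2) − εcL^(−1/2)`; its odd powers are `L^(p+1/2) − ε(2p+1)cL^(p−1/2)`, and the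
corresponding residue formula holds. -/
theorem deformation_by_central_constant
    (R : Type) [CommRing R] [Algebra ℚ R] (d : R →+ R)
    (hd : Leibniz d) (h : Rˣ) (hdh : d (h : R) = 0)
    (u c : R) (hc : d c = 0)
    (M Minv : PDO R d)
    (hM1 : M.coeff 1 = (h : R)) (hM2 : ∀ k : ℤ, 1 < k → M.coeff k = 0)
    (hM3 : M * M = PDO.Lop h u)
    (hMinv : M * Minv = 1 ∧ Minv * M = 1)
    (Lt Msq : EPDO R d)
    (hLt : Lt = EPDO.lift (PDO.Lop h u) - EPDO.eps * EPDO.lift (PDO.const (2 * c)))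
    (hMsq : Msq = EPDO.lift M - EPDO.eps * EPDO.lift (PDO.const c * Minv)) :
    (Msq * Msq = Lt ∧
      ∀ S : EPDO R d, S.re.coeff 1 = (h : R) → (∀ k : ℤ, 1 < k → S.re.coeff k = 0) →
        (∀ k : ℤ, 0 < k → S.im.coeff k = 0) → S * S = Lt → S = Msq) ∧
    (∀ p : ℕ, Msq ^ (2 * p + 1)
        = EPDO.lift (M ^ (2 * p + 1))
          - EPDO.eps * (((2 * p + 1 : ℕ) : ℚ)
              • EPDO.lift (PDO.const c * (Minv * M ^ (2 * p))))) ∧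
    (∀ p : ℕ, EPDO.eres (Msq ^ (2 * p + 1))
        = (PDO.res (M ^ (2 * p + 1)),
           -(((2 * p + 1 : ℕ) : ℚ) • (c * PDO.res (Minv * M ^ (2 * p)))))) := by
  obtain ⟨hMinv1, hMinv2⟩ := hMinv
  have hLt2 : Lt = ⟨PDO.Lop h u, -(PDO.const (2 * c))⟩ := by
    rw [hLt, EPDO.eps_mul_lift, EPDO.lift_sub_pair]
  have hMsq2 : Msq = ⟨M, -(PDO.const c * Minv)⟩ := by
    rw [hMsq, EPDO.eps_mul_lift, EPDO.lift_sub_pair]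
  have hMc : M * (PDO.const c * Minv) = PDO.const c := by
    rw [PDO.const_mul_right hd hc, hMinv1, PDO.mul_one' hd]
  have hcM : (PDO.const c * Minv) * M = PDO.const c := by
    rw [PDO.const_mul_left, hMinv2, PDO.mul_one' hd]
  have himeq : M * (-(PDO.const c * Minv)) + (-(PDO.const c * Minv)) * M
      = -(PDO.const (2 * c)) := by
    rw [PDO.mul_neg', PDO.neg_mul', hMc, hcM, ← neg_add, PDO.const_add,
      show c + c = 2 * c by ring]
  -- the key power computation
  have key : ∀ n : ℕ, Msq ^ (n + 1)
      = ⟨M ^ (n + 1), -(((n + 1 : ℕ) : ℚ) • (PDO.const c * (Minv * M ^ n)))⟩ := by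
    rw [hMsq2]
    intro n
    induction n with
    | zero =>
        refine EPDO.ext2 ?_ ?_
        · show (1 : PDO R d) * M = M ^ (0 + 1)
          rw [PDO.pow_succ', PDO.pow_zero']
        · show (1 : PDO R d) * (-(PDO.const c * Minv)) + 0 * M
            = -(((0 + 1 : ℕ) : ℚ) • (PDO.const c * (Minv * M ^ 0)))
          rw [PDO.one_mul', PDO.zero_mul', add_zero, PDO.pow_zero', PDO.mul_one' hd]
          congr 1
          refine (PDO.ext' (funext fun k => ?_)).symm
          rw [PDO.smul_coeff, Nat.cast_one, one_smul]
    | succ n ih =>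
        rw [EPDO.epow_succ, ih]
        refine EPDO.ext2 ?_ ?_
        · show M ^ (n + 1) * M = M ^ (n + 1 + 1)
          rw [PDO.pow_succ' M (n + 1)]
        · show M ^ (n + 1) * (-(PDO.const c * Minv))
              + (-(((n + 1 : ℕ) : ℚ) • (PDO.const c * (Minv * M ^ n)))) * M
            = -(((n + 1 + 1 : ℕ) : ℚ) • (PDO.const c * (Minv * M ^ (n + 1))))
          rw [PDO.mul_neg', PDO.neg_mul', PDO.smul_mul', PDO.const_mul_left,
            PDO.mul_assoc' hd, ← PDO.pow_succ',
            PDO.const_mul_right hd hc, PDO.pow_mul_inv hd M Minv hMinv1,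
            ← PDO.inv_mul_pow hd M Minv hMinv2 n]
          rw [PDO.neg_add_smul_neg]
          congr 2
          push_cast
          ring
  refine ⟨⟨?_, ?_⟩, ?_, ?_⟩
  · -- Msq * Msq = Lt
    rw [hMsq2, hLt2]
    refine EPDO.ext2 ?_ ?_
    · exact hM3
    · exact himeq
  · -- uniqueness
    intro S hS1 hS2 hS3 hSS
    have hre : S.re = M := by
      have h1 : S.re * S.re = PDO.Lop h u := by
        have := congrArg EPDO.re hSS
        rw [EPDO.mul_re, hLt2] at this
        exact this
      have hD0 : ∀ k : ℤ, 0 < k → (S.re - M).coeff k = 0 := by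
        intro k hk
        rw [PDO.sub_coeff]
        by_cases hk1 : k = 1
        · subst hk1; rw [hS1, hM1, sub_self]
        · rw [hS2 k (by omega), hM2 k (by omega), sub_self]
      have heq : S.re * (S.re - M) + (S.re - M) * M = 0 := by
        rw [PDO.mul_sub', PDO.sub_mul', h1, hM3]
        abel
      exact sub_eq_zero.mp (PDO.top_cancel h S.re M (S.re - M) hS1 hS2 hM1 hM2 hD0 heq)
    have him : S.im = -(PDO.const c * Minv) := by
      have hMinvb : ∀ k : ℤ, -1 < k → Minv.coeff k = 0 :=
        PDO.inv_bound h M Minv hM1 hM2 hMinv1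
      have hT0 : ∀ k : ℤ, 0 < k → (-(PDO.const c * Minv)).coeff k = 0 := by
        intro k hk
        rw [PDO.neg_coeff, PDO.const_mul_coeff, hMinvb k (by omega), mul_zero, neg_zero]
      have h2 : M * S.im + S.im * M = -(PDO.const (2 * c)) := by
        have := congrArg EPDO.im hSS
        rw [EPDO.mul_im, hre, hLt2] at this
        exact this
      have heq : M * (S.im - (-(PDO.const c * Minv)))
          + (S.im - (-(PDO.const c * Minv))) * M = 0 := by
        rw [PDO.mul_sub', PDO.sub_mul']
        have hre2 : M * S.im - M * (-(PDO.const c * Minv))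
            + (S.im * M - (-(PDO.const c * Minv)) * M)
            = (M * S.im + S.im * M)
              - (M * (-(PDO.const c * Minv)) + (-(PDO.const c * Minv)) * M) := by
          abel
        rw [hre2, h2, himeq, sub_self]
      have hD0 : ∀ k : ℤ, 0 < k → (S.im - (-(PDO.const c * Minv))).coeff k = 0 := by
        intro k hk
        rw [PDO.sub_coeff, hS3 k hk, hT0 k hk, sub_self]
      exact sub_eq_zero.mp (PDO.top_cancel h M M _ hM1 hM2 hM1 hM2 hD0 heq)
    rw [hMsq2]
    exact EPDO.ext2 hre him
  · -- power formula
    intro p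
    rw [key (2 * p), EPDO.smul_lift, EPDO.eps_mul_lift, EPDO.lift_sub_pair]
  · -- residues
    intro p
    rw [key (2 * p)]
    show (PDO.res (M ^ (2 * p + 1)),
        PDO.res (-(((2 * p + 1 : ℕ) : ℚ) • (PDO.const c * (Minv * M ^ (2 * p)))))) = _
    refine Prod.ext rfl ?_
    show PDO.res (-(((2 * p + 1 : ℕ) : ℚ) • (PDO.const c * (Minv * M ^ (2 * p)))))
        = -(((2 * p + 1 : ℕ) : ℚ) • (c * PDO.res (Minv * M ^ (2 * p))))
    unfold PDO.res
    rw [PDO.neg_coeff, PDO.smul_coeff, PDO.const_mul_coeff]
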